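/- For a sequence β = (β_1,...,β_n) ∈ (ℕ²)^n and a lattice diagram α = (α_1,...,α_n) of distinct points in ℕ², the action of the MacMahon monomial symmetric differential operator satisfies m_β(∂_X, ∂_Y) Δ_α = ∑_δ c_δ Δ_{α − δ}, where the sum is over distinct permutations δ of β, each c_δ is a nonnegative integer, and c_δ = 0 whenever α_i − δ_i ∉ ℕ² for some i. -/

import Mathlib

open MvPolynomial

/-- The constant-coefficient differential operator associated to a polynomial `P`,
applied to `Q`: each monomial `∏ xᵢ^{dᵢ}` of `P` acts as `∏ (∂/∂xᵢ)^{dᵢ}`. -/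
noncomputable def diffOp {σ : Type*} [Fintype σ] [DecidableEq σ]
    (P Q : MvPolynomial σ ℂ) : MvPolynomial σ ℂ :=
  ∑ d ∈ P.support,
    P.coeff d •
      ((d.support.toList.map fun i =>
          ((pderiv i).toLinearMap : Module.End ℂ (MvPolynomial σ ℂ)) ^ d i).prod) Q

/-- The lattice determinant `Δ_α = det(x_j^{α_{i,1}} y_j^{α_{i,2}})`. -/
noncomputable def latticeDet (n : ℕ) (α : Fin n → ℕ × ℕ) :
    MvPolynomial (Fin n ⊕ Fin n) ℂ :=
  Matrix.det (Matrix.of fun i j : Fin n =>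
    X (Sum.inl j) ^ (α i).1 * X (Sum.inr j) ^ (α i).2)

/-- The MacMahon monomial symmetric function `m_β = ∑_δ z_1^{δ_1} ⋯ z_n^{δ_n}`, summed
over the distinct permutations `δ` of `β`, where `z_j^{(c,d)} = x_j^c y_j^d`. -/
noncomputable def macMahon (n : ℕ) (β : Fin n → ℕ × ℕ) :
    MvPolynomial (Fin n ⊕ Fin n) ℂ :=
  ∑ δ ∈ Finset.image (fun τ : Equiv.Perm (Fin n) => β ∘ τ) Finset.univ,
    ∏ i, X (Sum.inl i) ^ (δ i).1 * X (Sum.inr i) ^ (δ i).2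

/-! ### Auxiliary lemmas -/

lemma pderiv_pow_monomial {σ : Type*} [DecidableEq σ] (i : σ) (k : ℕ) (u : σ →₀ ℕ) (c : ℂ) :
    (((pderiv i).toLinearMap : Module.End ℂ (MvPolynomial σ ℂ)) ^ k) (monomial u c)
      = (Nat.descFactorial (u i) k : ℂ) • monomial (u - Finsupp.single i k) c := by
  induction k generalizing u c with
  | zero => simp
  | succ k ih =>
    rw [pow_succ, Module.End.mul_apply]
    have h1 : ((pderiv i).toLinearMap : Module.End ℂ (MvPolynomial σ ℂ)) (monomial u c)
        = monomial (u - Finsupp.single i 1) (c * u i) := by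
      simp [pderiv_monomial]
    rw [h1, ih]
    have h2 : (u - Finsupp.single i 1 : σ →₀ ℕ) i = u i - 1 := by
      rw [Finsupp.tsub_apply, Finsupp.single_eq_same]
    have h3 : u - Finsupp.single i 1 - Finsupp.single i k = u - Finsupp.single i (k + 1) := by
      rw [tsub_tsub, ← Finsupp.single_add, add_comm]
    have h4 : Nat.descFactorial (u i - 1) k * u i = Nat.descFactorial (u i) (k + 1) := by
      cases h : u i with
      | zero => simp
      | succ m => rw [Nat.succ_sub_one, Nat.succ_descFactorial_succ, mul_comm]
    rw [h2, h3, smul_monomial, smul_monomial]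
    congr 1
    rw [smul_eq_mul, smul_eq_mul, ← h4]
    push_cast
    ring

lemma prodL {σ : Type*} [DecidableEq σ] (l : List σ) (hl : l.Nodup) (d : σ → ℕ)
    (u : σ →₀ ℕ) (c : ℂ) :
    ((l.map fun i => ((pderiv i).toLinearMap : Module.End ℂ (MvPolynomial σ ℂ)) ^ d i).prod)
        (monomial u c)
      = (∏ i ∈ l.toFinset, (Nat.descFactorial (u i) (d i) : ℂ)) •
          monomial (u - ∑ i ∈ l.toFinset, Finsupp.single i (d i)) c := by
  induction l with
  | nil => simp
  | cons a l ih =>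
    have ha : a ∉ l.toFinset := by
      simpa using (List.nodup_cons.mp hl).1
    rw [List.map_cons, List.prod_cons, Module.End.mul_apply, ih (List.nodup_cons.mp hl).2,
      map_smul, pderiv_pow_monomial]
    have h2 : (u - ∑ i ∈ l.toFinset, Finsupp.single i (d i) : σ →₀ ℕ) a = u a := by
      rw [Finsupp.tsub_apply]
      have : (∑ i ∈ l.toFinset, Finsupp.single i (d i) : σ →₀ ℕ) a = 0 := by
        rw [Finsupp.finset_sum_apply]
        exact Finset.sum_eq_zero fun i hi => Finsupp.single_eq_of_ne (by rintro rfl; exact ha hi)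
      rw [this, Nat.sub_zero]
    rw [h2, smul_smul, List.toFinset_cons, Finset.prod_insert ha, Finset.sum_insert ha,
      tsub_tsub, mul_comm, add_comm]

lemma prodSupp {σ : Type*} [Fintype σ] [DecidableEq σ] (d : σ →₀ ℕ) (u : σ →₀ ℕ) (c : ℂ) :
    ((d.support.toList.map fun i =>
        ((pderiv i).toLinearMap : Module.End ℂ (MvPolynomial σ ℂ)) ^ d i).prod) (monomial u c)
      = (∏ i, (Nat.descFactorial (u i) (d i) : ℂ)) • monomial (u - d) c := by
  rw [prodL _ d.support.nodup_toList]
  congr 1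
  · rw [Finset.toList_toFinset]
    refine Finset.prod_subset (Finset.subset_univ _) fun i _ hi => ?_
    rw [Finsupp.notMem_support_iff.mp hi]
    simp
  · rw [Finset.toList_toFinset,
      show (∑ i ∈ d.support, Finsupp.single i (d i)) = d from Finsupp.sum_single d]

noncomputable def pairF {n : ℕ} (a b : Fin n → ℕ) : (Fin n ⊕ Fin n) →₀ ℕ :=
  Finsupp.equivFunOnFinite.symm (Sum.elim a b)

@[simp] lemma pairF_apply_inl {n : ℕ} (a b : Fin n → ℕ) (i : Fin n) :
    pairF a b (Sum.inl i) = a i := rfl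

@[simp] lemma pairF_apply_inr {n : ℕ} (a b : Fin n → ℕ) (i : Fin n) :
    pairF a b (Sum.inr i) = b i := rfl

lemma pairF_sub {n : ℕ} (a b a' b' : Fin n → ℕ) :
    pairF a b - pairF a' b' = pairF (a - a') (b - b') := by
  ext x
  cases x <;> simp [Finsupp.tsub_apply, Pi.sub_apply]

lemma pairF_inj {n : ℕ} {a b a' b' : Fin n → ℕ} (h : pairF a b = pairF a' b') :
    a = a' ∧ b = b' := by
  constructor <;> funext i
  · have := congrArg (fun f => f (Sum.inl i)) h; simpa using this
  · have := congrArg (fun f => f (Sum.inr i)) h; simpa using this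

lemma monomial_prod {σ M : Type*} [DecidableEq σ] (s : Finset M) (f : M → (σ →₀ ℕ)) :
    ∏ i ∈ s, (monomial (f i) (1 : ℂ)) = monomial (∑ i ∈ s, f i) 1 := by
  classical
  induction s using Finset.induction_on with
  | empty => simp
  | insert _ _ h ih => rw [Finset.prod_insert h, Finset.sum_insert h, ih, monomial_mul, one_mul]

lemma pairF_eq_sum {n : ℕ} (a b : Fin n → ℕ) :
    pairF a b = ∑ i, (Finsupp.single (Sum.inl i) (a i) + Finsupp.single (Sum.inr i) (b i)) := by
  ext x
  rw [Finsupp.finset_sum_apply]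
  cases x with
  | inl j => simp [Finsupp.single_apply, Finset.sum_ite_eq']
  | inr j => simp [Finsupp.single_apply, Finset.sum_ite_eq']

lemma prodX {n : ℕ} (a b : Fin n → ℕ) :
    (∏ i, X (Sum.inl i) ^ a i * X (Sum.inr i) ^ b i : MvPolynomial (Fin n ⊕ Fin n) ℂ)
      = monomial (pairF a b) 1 := by
  have h : ∀ i : Fin n, (X (Sum.inl i) ^ a i * X (Sum.inr i) ^ b i :
      MvPolynomial (Fin n ⊕ Fin n) ℂ)
      = monomial (Finsupp.single (Sum.inl i) (a i) + Finsupp.single (Sum.inr i) (b i)) 1 := by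
    intro i
    rw [X_pow_eq_monomial, X_pow_eq_monomial, monomial_mul, one_mul]
  simp_rw [h, monomial_prod, pairF_eq_sum]

lemma sum_monomial_coeff {σ : Type*} [DecidableEq σ] (s : Finset (σ →₀ ℕ)) (u : σ →₀ ℕ) :
    coeff u (∑ d ∈ s, (monomial d (1 : ℂ))) = if u ∈ s then 1 else 0 := by
  rw [coeff_sum]
  simp_rw [coeff_monomial]
  rw [Finset.sum_ite_eq' s u (fun _ => (1 : ℂ))]

lemma diffOp_sum_monomial {σ : Type*} [Fintype σ] [DecidableEq σ]
    (s : Finset (σ →₀ ℕ)) (Q : MvPolynomial σ ℂ) :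
    diffOp (∑ d ∈ s, (monomial d (1 : ℂ))) Q =
      ∑ d ∈ s, ((d.support.toList.map fun i =>
          ((pderiv i).toLinearMap : Module.End ℂ (MvPolynomial σ ℂ)) ^ d i).prod) Q := by
  have hsupp : (∑ d ∈ s, (monomial d (1 : ℂ))).support = s := by
    ext u
    rw [mem_support_iff, sum_monomial_coeff]
    split <;> simp_all
  unfold diffOp
  rw [hsupp]
  refine Finset.sum_congr rfl fun d hd => ?_
  rw [sum_monomial_coeff, if_pos hd, one_smul]

noncomputable def Lop {σ : Type*} [Fintype σ] [DecidableEq σ] (d : σ →₀ ℕ) :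
    Module.End ℂ (MvPolynomial σ ℂ) :=
  (d.support.toList.map fun i =>
    ((pderiv i).toLinearMap : Module.End ℂ (MvPolynomial σ ℂ)) ^ d i).prod

lemma Lop_monomial {σ : Type*} [Fintype σ] [DecidableEq σ] (d : σ →₀ ℕ) (u : σ →₀ ℕ) (c : ℂ) :
    Lop d (monomial u c)
      = (∏ i, (Nat.descFactorial (u i) (d i) : ℂ)) • monomial (u - d) c :=
  prodSupp d u c

lemma diffOp_sum_monomial' {σ : Type*} [Fintype σ] [DecidableEq σ]
    (s : Finset (σ →₀ ℕ)) (Q : MvPolynomial σ ℂ) :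
    diffOp (∑ d ∈ s, (monomial d (1 : ℂ))) Q = ∑ d ∈ s, Lop d Q :=
  diffOp_sum_monomial s Q

noncomputable def pf {n : ℕ} (δ : Fin n → ℕ × ℕ) : (Fin n ⊕ Fin n) →₀ ℕ :=
  pairF (fun i => (δ i).1) (fun i => (δ i).2)

lemma pf_inj {n : ℕ} : Function.Injective (pf (n := n)) := by
  intro δ δ' h
  obtain ⟨h1, h2⟩ := pairF_inj h
  funext i
  exact Prod.ext (congrFun h1 i) (congrFun h2 i)

/-- exponent of the σ-term of `latticeDet n γ`. -/
noncomputable def detExp {n : ℕ} (γ : Fin n → ℕ × ℕ) (σ : Equiv.Perm (Fin n)) :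
    (Fin n ⊕ Fin n) →₀ ℕ :=
  pairF (fun j => (γ (σ j)).1) (fun j => (γ (σ j)).2)

lemma latticeDet_expand (n : ℕ) (γ : Fin n → ℕ × ℕ) :
    latticeDet n γ = ∑ σ : Equiv.Perm (Fin n),
      (Equiv.Perm.sign σ : ℂ) • monomial (detExp γ σ) 1 := by
  unfold latticeDet
  rw [Matrix.det_apply]
  refine Finset.sum_congr rfl fun σ _ => ?_
  rw [show (∏ j, (Matrix.of fun i j : Fin n =>
      (X (Sum.inl j) ^ (γ i).1 * X (Sum.inr j) ^ (γ i).2 : MvPolynomial (Fin n ⊕ Fin n) ℂ))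
        (σ j) j) = monomial (detExp γ σ) 1 from prodX _ _]
  rw [Units.smul_def, ← Int.cast_smul_eq_zsmul ℂ]

lemma macMahon_expand (n : ℕ) (β : Fin n → ℕ × ℕ) :
    macMahon n β = ∑ δ ∈ Finset.image (fun τ : Equiv.Perm (Fin n) => β ∘ τ) Finset.univ,
      monomial (pf δ) 1 := by
  unfold macMahon
  exact Finset.sum_congr rfl fun δ _ => prodX _ _

lemma orbit_comp_mem {n : ℕ} (β : Fin n → ℕ × ℕ) (σ : Equiv.Perm (Fin n))
    {δ : Fin n → ℕ × ℕ}
    (h : δ ∈ Finset.image (fun τ : Equiv.Perm (Fin n) => β ∘ τ) Finset.univ) :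
    (δ ∘ σ) ∈ Finset.image (fun τ : Equiv.Perm (Fin n) => β ∘ τ) Finset.univ := by
  simp only [Finset.mem_image, Finset.mem_univ, true_and] at h ⊢
  obtain ⟨τ, rfl⟩ := h
  exact ⟨τ * σ, rfl⟩

/-- For `β ∈ (ℕ²)^n` and a lattice diagram `α` of distinct points,
`m_β(∂_X,∂_Y) Δ_α = ∑_δ c_δ Δ_{α−δ}`, the sum over distinct permutations `δ` of `β`,
with nonnegative integer coefficients `c_δ`, and `c_δ = 0` whenever `α_i − δ_i ∉ ℕ²`
for some `i`. -/
theorem stmt_11 (n : ℕ) (β α : Fin n → ℕ × ℕ) (hα : Function.Injective α) :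
    ∃ c : (Fin n → ℕ × ℕ) → ℕ,
      diffOp (macMahon n β) (latticeDet n α) =
        (∑ δ ∈ Finset.image (fun τ : Equiv.Perm (Fin n) => β ∘ τ) Finset.univ,
          (c δ : ℂ) • latticeDet n (fun i => ((α i).1 - (δ i).1, (α i).2 - (δ i).2))) ∧
      ∀ δ : Fin n → ℕ × ℕ,
        (∃ i, ¬ ((δ i).1 ≤ (α i).1 ∧ (δ i).2 ≤ (α i).2)) → c δ = 0 := by
  classical
  refine ⟨fun δ => ∏ i, Nat.descFactorial (α i).1 (δ i).1 * Nat.descFactorial (α i).2 (δ i).2,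
    ?_, ?_⟩
  · -- main identity
    have hA : diffOp (macMahon n β) (latticeDet n α)
        = ∑ δ ∈ Finset.image (fun τ : Equiv.Perm (Fin n) => β ∘ τ) Finset.univ,
            Lop (pf δ) (latticeDet n α) := by
      have h1 : macMahon n β
          = ∑ d ∈ (Finset.image (fun τ : Equiv.Perm (Fin n) => β ∘ τ) Finset.univ).image pf,
              monomial d (1 : ℂ) := by
        rw [macMahon_expand, Finset.sum_image (fun x _ y _ h => pf_inj h)]
      rw [h1, diffOp_sum_monomial', Finset.sum_image (fun x _ y _ h => pf_inj h)]
    rw [hA]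
    have hB : ∀ δ ∈ Finset.image (fun τ : Equiv.Perm (Fin n) => β ∘ τ) Finset.univ,
        Lop (pf δ) (latticeDet n α)
        = ∑ σ : Equiv.Perm (Fin n), (Equiv.Perm.sign σ : ℂ) •
            ((∏ x, (Nat.descFactorial (detExp α σ x) (pf δ x) : ℂ)) •
              monomial (detExp α σ - pf δ) (1 : ℂ)) := by
      intro δ _
      rw [latticeDet_expand, map_sum]
      exact Finset.sum_congr rfl fun σ _ => by rw [map_smul, Lop_monomial]
    rw [Finset.sum_congr rfl hB, Finset.sum_comm]
    have hC : ∀ σ : Equiv.Perm (Fin n),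
        (∑ δ ∈ Finset.image (fun τ : Equiv.Perm (Fin n) => β ∘ τ) Finset.univ,
            (Equiv.Perm.sign σ : ℂ) •
            ((∏ x, (Nat.descFactorial (detExp α σ x) (pf δ x) : ℂ)) •
              monomial (detExp α σ - pf δ) (1 : ℂ)))
        = ∑ δ ∈ Finset.image (fun τ : Equiv.Perm (Fin n) => β ∘ τ) Finset.univ,
            (Equiv.Perm.sign σ : ℂ) •
            ((∏ x, (Nat.descFactorial (detExp α σ x) (pf (δ ∘ σ) x) : ℂ)) •
              monomial (detExp α σ - pf (δ ∘ σ)) (1 : ℂ)) := by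
      intro σ
      refine Finset.sum_nbij' (fun δ => δ ∘ ⇑(σ⁻¹)) (fun δ => δ ∘ ⇑σ)
        (fun δ hδ => orbit_comp_mem β σ⁻¹ hδ) (fun δ hδ => orbit_comp_mem β σ hδ)
        (fun δ _ => funext fun i => by simp) (fun δ _ => funext fun i => by simp)
        (fun δ _ => by
          have h : (fun δ' : Fin n → ℕ × ℕ => δ' ∘ ⇑(σ⁻¹)) δ ∘ ⇑σ = δ :=
            funext fun i => by simp
          rw [h])
    rw [Finset.sum_congr rfl fun σ _ => hC σ, Finset.sum_comm]
    refine Finset.sum_congr rfl fun δ hδ => ?_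
    have hcoef : ∀ σ : Equiv.Perm (Fin n),
        (∏ x, (Nat.descFactorial (detExp α σ x) (pf (δ ∘ σ) x) : ℂ))
        = ((∏ i, Nat.descFactorial (α i).1 (δ i).1 * Nat.descFactorial (α i).2 (δ i).2 : ℕ)
            : ℂ) := by
      intro σ
      rw [Fintype.prod_sum_type]
      have h1 : (∏ j, (Nat.descFactorial (detExp α σ (Sum.inl j)) (pf (δ ∘ σ) (Sum.inl j)) : ℂ))
          = ∏ j, (Nat.descFactorial (α j).1 (δ j).1 : ℂ) :=
        Equiv.prod_comp σ fun j => (Nat.descFactorial (α j).1 (δ j).1 : ℂ)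
      have h2 : (∏ j, (Nat.descFactorial (detExp α σ (Sum.inr j)) (pf (δ ∘ σ) (Sum.inr j)) : ℂ))
          = ∏ j, (Nat.descFactorial (α j).2 (δ j).2 : ℂ) :=
        Equiv.prod_comp σ fun j => (Nat.descFactorial (α j).2 (δ j).2 : ℂ)
      rw [h1, h2]
      push_cast [Finset.prod_mul_distrib]
      ring
    have hexp : ∀ σ : Equiv.Perm (Fin n), detExp α σ - pf (δ ∘ σ)
        = detExp (fun i => ((α i).1 - (δ i).1, (α i).2 - (δ i).2)) σ := by
      intro σ
      show pairF _ _ - pairF _ _ = _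
      rw [pairF_sub]
      rfl
    rw [latticeDet_expand, Finset.smul_sum]
    refine Finset.sum_congr rfl fun σ _ => ?_
    rw [hcoef σ, hexp σ, smul_smul, smul_smul, mul_comm]
  · -- vanishing condition
    intro δ ⟨i, hi⟩
    refine Finset.prod_eq_zero (Finset.mem_univ i) ?_
    rw [mul_eq_zero]
    rcases not_and_or.mp hi with h | h
    · exact Or.inl (Nat.descFactorial_eq_zero_iff_lt.mpr (not_le.mp h))
    · exact Or.inr (Nat.descFactorial_eq_zero_iff_lt.mpr (not_le.mp h))
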